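/- Let p be an odd prime, l ≥ 1, q = p^l, and α, β ∈ F_{q^2}. Suppose p_{α,β}(t) = t^{q+1} + α^q·t^q + α·t + (β + β^q) has q+1 distinct roots σ_0, …, σ_q in F_{q^2}, and set P_k = Σ_{i=0}^{q} σ_i^k. Then for every natural number k, P_{k+1} = −α^q·P_k if and only if deg_{α,β}(t^k) < q, i.e., if and only if the remainder of t^k upon division by p_{α,β}(t) has degree strictly less than q. -/

import Mathlib

open Polynomial

/-- Lemma 3 (power-sum criterion): with `P_k = Σ σ_i^k` the power sums of the `q+1`
distinct roots of `p_{α,β}`, we have `P_{k+1} = -α^q P_k` iff the remainder of `t^k`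
modulo `p_{α,β}(t)` has degree `< q`. -/
theorem powerSum_criterion (p l q : ℕ) (hp : p.Prime) (hodd : Odd p) (hl : 1 ≤ l)
    (hq : q = p ^ l) (F : Type*) [Field F] [Fintype F] (hF : Fintype.card F = q ^ 2)
    (α β : F) (σ : Fin (q + 1) → F) (hσinj : Function.Injective σ)
    (hσroot : ∀ i, (σ i) ^ (q + 1) + α ^ q * (σ i) ^ q + α * (σ i) + (β + β ^ q) = 0)
    (k : ℕ) :
    (∑ i, σ i ^ (k + 1)) = -α ^ q * (∑ i, σ i ^ k) ↔
      ((X ^ k : F[X]) %ₘ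
        (X ^ (q + 1) + C (α ^ q) * X ^ q + C α * X + C (β + β ^ q))).degree < (q : ℕ) := by
  have hl0 : l ≠ 0 := by omega
  have hq2 : 2 ≤ q := by
    have h1 : p ≤ p ^ l := Nat.le_self_pow hl0 p
    have := hp.two_le
    omega
  have hq0 : q ≠ 0 := by omega
  -- characteristic
  haveI hfact : Fact p.Prime := ⟨hp⟩
  haveI hchar : CharP F p := by
    obtain ⟨n, hrp, hcard⟩ := FiniteField.card F (ringChar F)
    have hpq : p ^ (2 * l) = ringChar F ^ (n : ℕ) := by
      rw [← hcard, hF, hq, ← pow_mul, mul_comm l 2]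
    have hdvd : p ∣ ringChar F ^ (n : ℕ) := by
      rw [← hpq]
      exact dvd_pow_self p (by omega)
    have := (Nat.Prime.prime hp).dvd_of_dvd_pow hdvd
    have hpr : p = ringChar F := ((Nat.prime_dvd_prime_iff_eq hp hrp).mp this)
    rw [hpr]
    infer_instance
  have hqF : (q : F) = 0 := by
    rw [hq]
    push_cast
    rw [CharP.cast_eq_zero F p, zero_pow hl0]
  -- notation
  set γ : F := β + β ^ q with hγdef
  set a : F := α ^ q with hadef
  set c : F := α ^ (q + 1) - γ with hcdef
  -- Frobenius
  have hfrob : ∀ x y : F, (x + y) ^ q = x ^ q + y ^ q := by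
    intro x y
    rw [hq]
    exact add_pow_char_pow (x := x) (y := y) p l
  have hαq2 : α ^ (q * q) = α := by
    have : Fintype.card F = q * q := by rw [hF]; ring
    calc α ^ (q * q) = α ^ Fintype.card F := by rw [this]
      _ = α := FiniteField.pow_card α
  -- τ
  set τ : Fin (q + 1) → F := fun i => σ i + a with hτdef
  have hτinj : Function.Injective τ := fun i j h => hσinj (add_right_cancel h)
  have hτpow : ∀ i, τ i ^ (q + 1) = c := by
    intro i
    have h1 : τ i ^ (q + 1) = (σ i ^ q + α) * (σ i + a) := by
      rw [pow_succ]
      congr 1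
      rw [hτdef]
      simp only
      rw [hfrob (σ i) a, hadef, ← pow_mul, hαq2]
    rw [h1, hcdef, hadef]
    linear_combination hσroot i
  have hc0 : c ≠ 0 := by
    intro hc
    have hz : ∀ i, τ i = 0 := by
      intro i
      have := hτpow i
      rw [hc] at this
      exact pow_eq_zero_iff (by omega) |>.mp this
    have : τ 0 = τ 1 := by rw [hz 0, hz 1]
    have h01 : (0 : Fin (q + 1)) = 1 := hτinj this
    have : ((0 : Fin (q+1)) : ℕ) = ((1 : Fin (q+1)) : ℕ) := by rw [h01]
    simp [Fin.val_one, Nat.mod_eq_of_lt (show 1 < q + 1 by omega)] at this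
  -- an element of multiplicative order q + 1
  obtain ⟨ζ, hζ1, hζord⟩ : ∃ ζ : F, ζ ^ (q + 1) = 1 ∧ ∀ m, 0 < m → m < q + 1 → ζ ^ m ≠ 1 := by
    classical
    obtain ⟨g, hg⟩ := IsCyclic.exists_generator (α := Fˣ)
    have hcardu : Nat.card Fˣ = q ^ 2 - 1 := by
      rw [Nat.card_eq_fintype_card, Fintype.card_units, hF]
    have horder : orderOf g = q ^ 2 - 1 := by
      rw [orderOf_eq_card_of_forall_mem_zpowers hg, hcardu]
    have hmul : (q - 1) * (q + 1) = q ^ 2 - 1 := by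
      cases q with
      | zero => omega
      | succ m =>
        simp only [Nat.succ_sub_one]
        have : (m + 1) ^ 2 = m * (m + 1 + 1) + 1 := by ring
        omega
    have hordζ : orderOf (g ^ (q - 1)) = q + 1 := by
      rw [orderOf_pow, horder]
      have hgcd : Nat.gcd (q ^ 2 - 1) (q - 1) = q - 1 :=
        Nat.gcd_eq_right ⟨q + 1, hmul.symm⟩
      rw [hgcd, ← hmul, Nat.mul_div_cancel_left _ (by omega : 0 < q - 1)]
    refine ⟨((g ^ (q - 1) : Fˣ) : F), ?_, ?_⟩
    · rw [← Units.val_pow_eq_pow_val, ← hordζ, pow_orderOf_eq_one]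
      simp
    · intro m hm hmlt h
      have hu : (g ^ (q - 1)) ^ m = 1 := by
        apply Units.ext
        rw [Units.val_pow_eq_pow_val]
        simpa using h
      have := orderOf_le_of_pow_eq_one hm hu
      omega
  have hζne : ζ ≠ 0 := by
    intro h
    rw [h, zero_pow (by omega : q + 1 ≠ 0)] at hζ1
    exact zero_ne_one hζ1
  -- power sums of the τ's
  classical
  have hSq1 : (∑ i, τ i ^ (q + 1)) = c := by
    have : (∑ i, τ i ^ (q + 1)) = ∑ _i : Fin (q + 1), c := by
      apply Finset.sum_congr rfl
      intro i _
      exact hτpow i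
    rw [this, Finset.sum_const, Finset.card_univ, Fintype.card_fin, nsmul_eq_mul]
    push_cast
    rw [hqF]
    ring
  have hS0 : ∀ m, 0 < m → m < q + 1 → (∑ i, τ i ^ m) = 0 := by
    intro m hm hmlt
    set T : Finset F := Finset.image τ Finset.univ with hTdef
    have hTcard : T.card = q + 1 := by
      rw [hTdef, Finset.card_image_of_injective _ hτinj, Finset.card_univ,
        Fintype.card_fin]
    have hTpow : ∀ t ∈ T, t ^ (q + 1) = c := by
      intro t ht
      obtain ⟨i, _, rfl⟩ := Finset.mem_image.mp ht
      exact hτpow i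
    -- T is exactly the root set of X^(q+1) - C c
    set Pc : F[X] := X ^ (q + 1) - C c with hPcdef
    have hPc0 : Pc ≠ 0 := X_pow_sub_C_ne_zero (by omega) c
    have hTsub : T ⊆ Pc.roots.toFinset := by
      intro t ht
      rw [Multiset.mem_toFinset, mem_roots hPc0]
      simp only [hPcdef, IsRoot.def, eval_sub, eval_pow, eval_X, eval_C]
      rw [hTpow t ht, sub_self]
    have hTeq : T = Pc.roots.toFinset := by
      apply Finset.eq_of_subset_of_card_le hTsub
      calc Pc.roots.toFinset.card ≤ Multiset.card Pc.roots := Multiset.toFinset_card_le _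
        _ ≤ Pc.natDegree := Pc.card_roots'
        _ = q + 1 := by rw [hPcdef, natDegree_X_pow_sub_C]
        _ = T.card := hTcard.symm
    have hmem : ∀ t ∈ T, ζ * t ∈ T := by
      intro t ht
      rw [hTeq, Multiset.mem_toFinset, mem_roots hPc0]
      simp only [hPcdef, IsRoot.def, eval_sub, eval_pow, eval_X, eval_C]
      rw [mul_pow, hζ1, one_mul, hTpow t ht, sub_self]
    have himg : T.image (fun t => ζ * t) = T := by
      apply Finset.eq_of_subset_of_card_le
      · intro t ht
        obtain ⟨s, hs, rfl⟩ := Finset.mem_image.mp ht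
        exact hmem s hs
      · rw [Finset.card_image_of_injective _ (mul_right_injective₀ hζne)]
    have hsumT : (∑ i, τ i ^ m) = ∑ t ∈ T, t ^ m := by
      rw [hTdef, Finset.sum_image (fun i _ j _ h => hτinj h)]
    have hrot : (∑ t ∈ T, t ^ m) = ζ ^ m * ∑ t ∈ T, t ^ m := by
      conv_lhs => rw [← himg]
      rw [Finset.sum_image (fun i _ j _ h => mul_right_injective₀ hζne h),
        Finset.mul_sum]
      apply Finset.sum_congr rfl
      intro t _
      rw [mul_pow]
    have : (ζ ^ m - 1) * ∑ t ∈ T, t ^ m = 0 := by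
      rw [sub_mul, one_mul, ← hrot, sub_self]
    rcases mul_eq_zero.mp this with h | h
    · exact absurd (by linear_combination h) (hζord m hm hmlt)
    · rw [hsumT, h]
  -- the key linear recurrences for power sums of the σ's
  have hM : ∀ j, j ≤ q →
      ((∑ i, σ i ^ (j + 1)) + a * ∑ i, σ i ^ j) = if j = q then c else 0 := by
    intro j hj
    have hστ : ∀ i : Fin (q + 1), σ i = τ i - a := by
      intro i
      simp [hτdef]
    have h1 : ((∑ i, σ i ^ (j + 1)) + a * ∑ i, σ i ^ j)
        = ∑ m ∈ Finset.range (j + 1),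
            (∑ i, τ i ^ (m + 1)) * ((-a) ^ (j - m) * (j.choose m : F)) := by
      have h2 : ∀ i : Fin (q + 1), σ i ^ (j + 1) + a * σ i ^ j
          = ∑ m ∈ Finset.range (j + 1),
              τ i ^ (m + 1) * ((-a) ^ (j - m) * (j.choose m : F)) := by
        intro i
        have hbin : (τ i - a) ^ j
            = ∑ m ∈ Finset.range (j + 1), τ i ^ m * (-a) ^ (j - m) * (j.choose m : F) := by
          rw [sub_eq_add_neg, add_pow]
        calc σ i ^ (j + 1) + a * σ i ^ j = (τ i - a) ^ j * τ i := by
              rw [hστ i]; ring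
          _ = _ := by
              rw [hbin, Finset.sum_mul]
              apply Finset.sum_congr rfl
              intro m _
              ring
      calc (∑ i, σ i ^ (j + 1)) + a * ∑ i, σ i ^ j
          = ∑ i, (σ i ^ (j + 1) + a * σ i ^ j) := by
            rw [Finset.sum_add_distrib, Finset.mul_sum]
        _ = ∑ i, ∑ m ∈ Finset.range (j + 1),
              τ i ^ (m + 1) * ((-a) ^ (j - m) * (j.choose m : F)) :=
            Finset.sum_congr rfl (fun i _ => h2 i)
        _ = ∑ m ∈ Finset.range (j + 1), ∑ i,
              τ i ^ (m + 1) * ((-a) ^ (j - m) * (j.choose m : F)) := Finset.sum_comm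
        _ = _ := by
            apply Finset.sum_congr rfl
            intro m _
            rw [Finset.sum_mul]
    rw [h1]
    by_cases hjq : j = q
    · subst hjq
      rw [if_pos rfl, Finset.sum_eq_single j]
      · rw [hSq1, Nat.sub_self, pow_zero, Nat.choose_self, one_mul, Nat.cast_one, mul_one]
      · intro m hm hmne
        rw [hS0 (m + 1) (by omega)
          (by have := Finset.mem_range.mp hm; omega), zero_mul]
      · intro h
        exact absurd (Finset.mem_range.mpr (by omega)) h
    · rw [if_neg hjq]
      apply Finset.sum_eq_zero
      intro m hm
      rw [hS0 (m + 1) (by omega)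
        (by have := Finset.mem_range.mp hm; omega), zero_mul]
  -- the modulus polynomial
  set Pp : F[X] := X ^ (q + 1) + C a * X ^ q + C α * X + C γ with hPpdef
  have hrest : (C a * X ^ q + (C α * X + C γ)).degree < ((q + 1 : ℕ) : WithBot ℕ) := by
    apply lt_of_le_of_lt (degree_add_le _ _)
    apply max_lt
    · apply lt_of_le_of_lt (degree_C_mul_X_pow_le q a)
      exact_mod_cast Nat.lt_succ_self q
    · apply lt_of_le_of_lt (degree_add_le _ _)
      apply max_lt
      · apply lt_of_le_of_lt (degree_C_mul_X_le α)
        exact_mod_cast (by omega : 1 < q + 1)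
      · apply lt_of_le_of_lt degree_C_le
        exact_mod_cast (by omega : 0 < q + 1)
  have hPpeq : Pp = X ^ (q + 1) + (C a * X ^ q + (C α * X + C γ)) := by
    rw [hPpdef]; ring
  have hmonic : Pp.Monic := by
    rw [hPpeq]
    exact monic_X_pow_add hrest
  have hdegPp : Pp.degree = ((q + 1 : ℕ) : WithBot ℕ) := by
    rw [hPpeq, ← degree_X_pow (R := F) (q + 1)]
    exact degree_add_eq_left_of_degree_lt (by rwa [degree_X_pow])
  have hPeval : ∀ i, Pp.eval (σ i) = 0 := by
    intro i
    simp only [hPpdef, eval_add, eval_mul, eval_pow, eval_X, eval_C]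
    linear_combination hσroot i
  set r : F[X] := (X ^ k : F[X]) %ₘ Pp with hrdef
  have hdegr : r.degree < ((q + 1 : ℕ) : WithBot ℕ) := by
    rw [← hdegPp]
    exact degree_modByMonic_lt _ hmonic
  have hnat : r.natDegree < q + 1 := by
    by_cases h0 : r = 0
    · rw [h0]; simp
    · exact (natDegree_lt_iff_degree_lt h0).mpr hdegr
  have hrem : ∀ i, (σ i) ^ k = r.eval (σ i) := by
    intro i
    have h := modByMonic_add_div (X ^ k : F[X]) Pp
    have h2 := congrArg (eval (σ i)) h
    simp only [eval_add, eval_mul, eval_pow, eval_X, hPeval i, zero_mul, add_zero] at h2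
    exact h2.symm
  have hkey : (∑ i, σ i ^ (k + 1)) + a * (∑ i, σ i ^ k) = c * r.coeff q := by
    calc (∑ i, σ i ^ (k + 1)) + a * (∑ i, σ i ^ k)
        = ∑ i, (σ i + a) * σ i ^ k := by
          rw [Finset.mul_sum, ← Finset.sum_add_distrib]
          exact Finset.sum_congr rfl (fun i _ => by ring)
      _ = ∑ i, (σ i + a) * r.eval (σ i) :=
          Finset.sum_congr rfl (fun i _ => by rw [← hrem i])
      _ = ∑ i, (σ i + a) * ∑ j ∈ Finset.range (q + 1), r.coeff j * σ i ^ j := by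
          apply Finset.sum_congr rfl
          intro i _
          rw [eval_eq_sum_range' hnat]
      _ = ∑ i, ∑ j ∈ Finset.range (q + 1), (σ i + a) * (r.coeff j * σ i ^ j) := by
          apply Finset.sum_congr rfl
          intro i _
          rw [Finset.mul_sum]
      _ = ∑ j ∈ Finset.range (q + 1), ∑ i, (σ i + a) * (r.coeff j * σ i ^ j) :=
          Finset.sum_comm
      _ = ∑ j ∈ Finset.range (q + 1),
            r.coeff j * ((∑ i, σ i ^ (j + 1)) + a * ∑ i, σ i ^ j) := by
          apply Finset.sum_congr rfl
          intro j _
          simp only [mul_add, Finset.mul_sum, ← Finset.sum_add_distrib]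
          exact Finset.sum_congr rfl (fun i _ => by ring)
      _ = ∑ j ∈ Finset.range (q + 1), r.coeff j * (if j = q then c else 0) := by
          apply Finset.sum_congr rfl
          intro j hjmem
          rw [hM j (by have := Finset.mem_range.mp hjmem; omega)]
      _ = ∑ j ∈ Finset.range (q + 1), (if j = q then r.coeff j * c else 0) := by
          apply Finset.sum_congr rfl
          intro j _
          split <;> simp
      _ = c * r.coeff q := by
          rw [Finset.sum_ite_eq' (Finset.range (q + 1)) q (fun j => r.coeff j * c),
            if_pos (Finset.mem_range.mpr (by omega)), mul_comm]
  constructor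
  · intro h
    have h0 : c * r.coeff q = 0 := by rw [← hkey, h]; ring
    have hcoeff : r.coeff q = 0 := (mul_eq_zero.mp h0).resolve_left hc0
    rw [degree_lt_iff_coeff_zero]
    intro m hm
    rcases Nat.lt_or_ge q m with hlt | hge
    · apply coeff_eq_zero_of_degree_lt
      exact lt_of_lt_of_le hdegr (by exact_mod_cast hlt)
    · have : m = q := by exact_mod_cast le_antisymm hge hm
      rw [this]; exact hcoeff
  · intro h
    have hcoeff : r.coeff q = 0 := coeff_eq_zero_of_degree_lt h
    rw [hcoeff, mul_zero] at hkey
    linear_combination hkey
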